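/- There exist cutoff stable matchings that the cutoff-decreasing algorithm cannot output under any project order: in the instance with A = {a1,a2}, P = {p1,p2} of capacity 1, one supervisor with budget 2 supervising both, preferences a1: p1,p2; a2: p2,p1; p1: a2,a1; p2: a1,a2, both project orders produce {(a2,p1),(a1,p2)}, yet {(a1,p1),(a2,p2)} is also cutoff stable. -/

import Mathlib

open Finset

/-- An instance of the two-sided matching problem: applicants `A` with strict preference
lists over acceptable projects, projects `P` with strict preference lists over
acceptable applicants (best first), and capacities. -/
structure MatchInst (A P : Type) where
  prefA : A → List P
  prefP : P → List A
  cap : P → ℕ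

variable {A P : Type} [Fintype A] [Fintype P] [DecidableEq A] [DecidableEq P]

/-- number of applicants matched to project `p` -/
def mcount (M : A → Option P) (p : P) : ℕ := (univ.filter fun a => M a = some p).card

/-- counts after adding one extra applicant to project `p` (the matching `M ∪ {(a,p)}`) -/
def addCount (M : A → Option P) (p : P) : P → ℕ :=
  fun q => mcount M q + if q = p then 1 else 0

/-- the matching `(M ∪ {(a,p)}) \ {(a, M(a))}` -/
def swap (M : A → Option P) (a : A) (p : P) : A → Option P := Function.update M a (some p)

/-- a feasibility function on (anonymous) distributions of applicants over projects,
satisfying the heredity property -/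
def Heredity (f : (P → ℕ) → Prop) : Prop :=
  f (fun _ => 0) ∧ ∀ v w : P → ℕ, (∀ p, w p ≤ v p) → f v → f w

namespace MatchInst

variable (I : MatchInst A P)

def accA (a : A) (p : P) : Prop := p ∈ I.prefA a
def accP (p : P) (a : A) : Prop := a ∈ I.prefP p
/-- rank of project `p` in applicant `a`'s list (0-indexed; lower is better) -/
def rkA (a : A) (p : P) : ℕ := (I.prefA a).idxOf p
/-- rank of applicant `a` in project `p`'s list (0-indexed; lower is better) -/
def rkP (p : P) (a : A) : ℕ := (I.prefP p).idxOf a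
/-- score of applicant `a` at project `p`: `|A| - k + 1` if `a` is ranked `k`-th, `0` if unranked -/
def score (p : P) (a : A) : ℕ :=
  if a ∈ I.prefP p then Fintype.card A - (I.prefP p).idxOf a else 0

def IsMatching (M : A → Option P) : Prop :=
  (∀ a p, M a = some p → I.accA a p ∧ I.accP p a) ∧ ∀ p, mcount M p ≤ I.cap p

/-- `a` strictly prefers project `p` to the assignment `o` (being unmatched is worst) -/
def Prefers (a : A) (p : P) (o : Option P) : Prop :=
  I.accA a p ∧ ∀ q, o = some q → I.rkA a p < I.rkA a q

/-- no justified envy -/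
def Fair (M : A → Option P) : Prop :=
  ∀ a p, M a ≠ some p → I.Prefers a p (M a) →
    ∀ a', M a' = some p → I.rkP p a' < I.rkP p a

/-- applicant `a` is admissible at project `p` under cutoffs `d` -/
def Adm (d : P → ℕ) (a : A) (p : P) : Prop :=
  I.accA a p ∧ I.accP p a ∧ d p ≤ I.score p a

/-- cutoffs `d` induce the matching `M`: every applicant is matched to her most
preferred project where she is admissible (and unmatched if there is none) -/
def Induces (d : P → ℕ) (M : A → Option P) : Prop :=
  ∀ a : A,
    (∀ p, M a = some p → I.Adm d a p ∧ ∀ q, I.Adm d a q → q ≠ p → I.rkA a p < I.rkA a q) ∧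
    (M a = none → ∀ p, ¬ I.Adm d a p)

def Blocking (M : A → Option P) (a : A) (p : P) : Prop :=
  I.Prefers a p (M a) ∧
    ((mcount M p < I.cap p ∧ I.accP p a) ∨ ∃ a', M a' = some p ∧ I.rkP p a < I.rkP p a')

def StronglyStable (f : (P → ℕ) → Prop) (M : A → Option P) : Prop :=
  I.IsMatching M ∧ f (mcount M) ∧
    ∀ a p, I.Blocking M a p →
      (∀ a', M a' = some p → I.rkP p a' < I.rkP p a) ∧ ¬ f (mcount (swap M a p))

/-- weak stability in terms of permitted blocking pairs -/
def WeaklyStableBlk (f : (P → ℕ) → Prop) (M : A → Option P) : Prop :=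
  I.IsMatching M ∧ f (mcount M) ∧
    ∀ a p, I.Blocking M a p →
      (∀ a', M a' = some p → I.rkP p a' < I.rkP p a) ∧ ¬ f (addCount M p)

def WeaklyNonWasteful (f : (P → ℕ) → Prop) (M : A → Option P) : Prop :=
  f (mcount M) ∧ ∀ a p, M a ≠ some p → I.accP p a → I.Prefers a p (M a) →
    ¬ f (addCount M p) ∨ I.cap p ≤ mcount M p

/-- weak stability as fairness plus weak non-wastefulness -/
def WeaklyStable (f : (P → ℕ) → Prop) (M : A → Option P) : Prop :=
  I.IsMatching M ∧ I.Fair M ∧ I.WeaklyNonWasteful f M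

def CutoffNonWasteful (f : (P → ℕ) → Prop) (M : A → Option P) : Prop :=
  f (mcount M) ∧ ∀ a p, M a ≠ some p → I.accP p a → I.Prefers a p (M a) →
    ¬ f (mcount (swap M a p)) ∨
    (∃ a', M a' ≠ some p ∧ I.accP p a' ∧ I.rkP p a' < I.rkP p a ∧
      I.Prefers a' p (M a') ∧ ¬ f (mcount (swap M a' p))) ∨
    I.cap p ≤ mcount M p

def CutoffStable (f : (P → ℕ) → Prop) (M : A → Option P) : Prop :=
  I.IsMatching M ∧ I.Fair M ∧ I.CutoffNonWasteful f M

/-- project `p` is unconstrained for `M`: one more applicant can be added to `p` feasibly -/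
def Unconstrained (f : (P → ℕ) → Prop) (M : A → Option P) (p : P) : Prop :=
  f (addCount M p)

/-- cutoffs after decreasing the cutoff of `p` by one -/
def decCut (d : P → ℕ) (p : P) : P → ℕ := Function.update d p (d p - 1)

/-- minimal cutoffs: no cutoff can be decreased keeping the induced matching feasible -/
def MinimalCutoffs (f : (P → ℕ) → Prop) (d : P → ℕ) : Prop :=
  ∀ p, d p = 0 ∨ ∀ M', I.Induces (decCut d p) M' → ¬ f (mcount M')

def StrictlyBetter (a : A) (o o' : Option P) : Prop :=
  ∃ p, o = some p ∧ I.accA a p ∧ ∀ q, o' = some q → I.rkA a p < I.rkA a q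

def ParetoDominates (M' M : A → Option P) : Prop :=
  (∀ a, M' a = M a ∨ I.StrictlyBetter a (M' a) (M a)) ∧
    ∃ a, I.StrictlyBetter a (M' a) (M a)

end MatchInst

section Algorithm

instance (I : MatchInst A P) (d : P → ℕ) (a : A) (p : P) : Decidable (I.Adm d a p) :=
  decidable_of_iff (p ∈ I.prefA a ∧ a ∈ I.prefP p ∧ d p ≤ I.score p a) Iff.rfl

variable [LinearOrder P]

/-- the matching induced by cutoffs `d`: each applicant goes to her most preferred
project where she is admissible -/
def MatchInst.inducedM (I : MatchInst A P) (d : P → ℕ) (a : A) : Option P :=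
  ((univ.filter fun p => I.Adm d a p).sort (· ≤ ·)).argmin fun p => I.rkA a p

/-- the cutoff of `p` can be decreased by one keeping the induced matching feasible -/
def MatchInst.DecStep (I : MatchInst A P) (f : (P → ℕ) → Prop) (d : P → ℕ) (p : P) : Prop :=
  1 ≤ d p ∧ f (mcount (I.inducedM (MatchInst.decCut d p)))

/-- one step of the cutoff-decreasing algorithm: decrement the cutoff of the first
project (w.r.t. the processing order `ord`) whose decrement keeps feasibility -/
def MatchInst.AlgStep (I : MatchInst A P) (f : (P → ℕ) → Prop) (ord : P → P → Prop)
    (d d' : P → ℕ) : Prop :=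
  ∃ p, I.DecStep f d p ∧ (∀ q, ord q p → ¬ I.DecStep f d q) ∧ d' = MatchInst.decCut d p

/-- the cutoff-decreasing algorithm outputs `M`: starting from cutoffs `|A|+1`
everywhere, a sequence of steps reaches minimal cutoffs inducing `M` -/
def MatchInst.Outputs (I : MatchInst A P) (f : (P → ℕ) → Prop) (ord : P → P → Prop)
    (M : A → Option P) : Prop :=
  ∃ d : P → ℕ, Relation.ReflTransGen (I.AlgStep f ord) (fun _ => Fintype.card A + 1) d ∧
    (∀ p, ¬ I.DecStep f d p) ∧ M = I.inducedM d

end Algorithm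

/-- the instance: `a1: p1,p2`; `a2: p2,p1`; `p1: a2,a1`; `p2: a1,a2`; capacities 1,
one supervisor of budget 2 supervising both projects -/
def I17 : MatchInst (Fin 2) (Fin 2) :=
  ⟨![[0, 1], [1, 0]], ![[1, 0], [0, 1]], fun _ => 1⟩

/-- feasibility: every capacity-respecting matching is feasible (budget 2 covers both) -/
def f17 : (Fin 2 → ℕ) → Prop := fun v => v 0 ≤ 1 ∧ v 1 ≤ 1

-- ===== auxiliary machinery =====

instance : DecidablePred f17 := fun v => decidable_of_iff (v 0 ≤ 1 ∧ v 1 ≤ 1) Iff.rfl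

instance (a : Fin 2) (p : Fin 2) : Decidable (I17.accA a p) :=
  decidable_of_iff (p ∈ I17.prefA a) Iff.rfl

instance (p : Fin 2) (a : Fin 2) : Decidable (I17.accP p a) :=
  decidable_of_iff (a ∈ I17.prefP p) Iff.rfl

instance (a : Fin 2) (p : Fin 2) (o : Option (Fin 2)) : Decidable (I17.Prefers a p o) :=
  decidable_of_iff (I17.accA a p ∧ ∀ q, o = some q → I17.rkA a p < I17.rkA a q) Iff.rfl

instance (M : Fin 2 → Option (Fin 2)) : Decidable (I17.IsMatching M) :=
  decidable_of_iff ((∀ a p, M a = some p → I17.accA a p ∧ I17.accP p a) ∧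
    ∀ p, mcount M p ≤ I17.cap p) Iff.rfl

instance (M : Fin 2 → Option (Fin 2)) : Decidable (I17.Fair M) :=
  decidable_of_iff (∀ a p, M a ≠ some p → I17.Prefers a p (M a) →
    ∀ a', M a' = some p → I17.rkP p a' < I17.rkP p a) Iff.rfl

set_option synthInstance.maxSize 1000 in
instance (M : Fin 2 → Option (Fin 2)) : Decidable (I17.CutoffNonWasteful f17 M) :=
  decidable_of_iff (f17 (mcount M) ∧ ∀ a p, M a ≠ some p → I17.accP p a →
    I17.Prefers a p (M a) →
    ¬ f17 (mcount (swap M a p)) ∨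
    (∃ a', M a' ≠ some p ∧ I17.accP p a' ∧ I17.rkP p a' < I17.rkP p a ∧
      I17.Prefers a' p (M a') ∧ ¬ f17 (mcount (swap M a' p))) ∨
    I17.cap p ≤ mcount M p) Iff.rfl

lemma sortFin2 (s : Finset (Fin 2)) : s.sort (· ≤ ·) =
    if (0 : Fin 2) ∈ s then (if (1 : Fin 2) ∈ s then [0, 1] else [0])
    else (if (1 : Fin 2) ∈ s then [1] else []) := by
  have h : s = ∅ ∨ s = {0} ∨ s = {1} ∨ s = {0, 1} := by
    revert s; decide
  rcases h with rfl | rfl | rfl | rfl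
  · simp
  · simp
  · simp
  · rw [Finset.sort_insert (· ≤ ·) (fun b hb => by fin_cases hb <;> decide) (by decide),
      Finset.sort_singleton]
    decide

/-- an explicitly computable form of the induced matching for `I17` -/
def L17 (d : Fin 2 → ℕ) (a : Fin 2) : Option (Fin 2) :=
  (if I17.Adm d a 0 then (if I17.Adm d a 1 then [0, 1] else [0])
   else (if I17.Adm d a 1 then [1] else [])).argmin (I17.rkA a)

lemma indM (d : Fin 2 → ℕ) : I17.inducedM d = L17 d := by
  funext a
  rw [MatchInst.inducedM, sortFin2, L17]
  simp [Finset.mem_filter]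

lemma decStep_iff (d : Fin 2 → ℕ) (p : Fin 2) :
    I17.DecStep f17 d p ↔ 1 ≤ d p ∧ f17 (mcount (L17 (MatchInst.decCut d p))) := by
  rw [MatchInst.DecStep, indM]

instance (d : Fin 2 → ℕ) (p : Fin 2) : Decidable (I17.DecStep f17 d p) :=
  decidable_of_iff _ (decStep_iff d p).symm

/-- start cutoffs, and the cutoffs reached along the two runs -/
def c0 : Fin 2 → ℕ := fun _ => 3
def c1 : Fin 2 → ℕ := MatchInst.decCut c0 0
def c2 : Fin 2 → ℕ := MatchInst.decCut c1 1
def e1 : Fin 2 → ℕ := MatchInst.decCut c0 1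
def e2 : Fin 2 → ℕ := MatchInst.decCut e1 0

lemma reach_lt (d : Fin 2 → ℕ)
    (h : Relation.ReflTransGen (I17.AlgStep f17 (· < ·)) c0 d) :
    d = c0 ∨ d = c1 ∨ d = c2 := by
  induction h with
  | refl => exact Or.inl rfl
  | tail _ step ih =>
    obtain ⟨p, hp, hmin, rfl⟩ := step
    rcases ih with rfl | rfl | rfl
    · fin_cases p
      · exact Or.inr (Or.inl rfl)
      · exact absurd (by decide : I17.DecStep f17 c0 0) (hmin 0 (by decide))
    · fin_cases p
      · exact absurd hp (by decide)
      · exact Or.inr (Or.inr rfl)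
    · exact absurd hp (by fin_cases p <;> decide)

lemma reach_gt (d : Fin 2 → ℕ)
    (h : Relation.ReflTransGen (I17.AlgStep f17 (fun p q => q < p)) c0 d) :
    d = c0 ∨ d = e1 ∨ d = e2 := by
  induction h with
  | refl => exact Or.inl rfl
  | tail _ step ih =>
    obtain ⟨p, hp, hmin, rfl⟩ := step
    rcases ih with rfl | rfl | rfl
    · fin_cases p
      · exact absurd (by decide : I17.DecStep f17 c0 1) (hmin 1 (by decide))
      · exact Or.inr (Or.inl rfl)
    · fin_cases p
      · exact Or.inr (Or.inr rfl)
      · exact absurd hp (by decide)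
    · exact absurd hp (by fin_cases p <;> decide)

/-- under both project orders the cutoff-decreasing algorithm outputs
`{(a2,p1),(a1,p2)}`, yet `{(a1,p1),(a2,p2)}` is also cutoff stable; so some cutoff
stable matchings cannot be produced by the algorithm under any project order. -/
theorem algorithm_misses_cutoffStable :
    (∀ M, I17.Outputs f17 (· < ·) M ↔ M = ![some 1, some 0]) ∧
    (∀ M, I17.Outputs f17 (fun p q => q < p) M ↔ M = ![some 1, some 0]) ∧
    I17.CutoffStable f17 ![some 0, some 1] ∧
    (![some 0, some 1] : Fin 2 → Option (Fin 2)) ≠ ![some 1, some 0] := by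
  refine ⟨?_, ?_, ?_, by decide⟩
  · intro M
    constructor
    · rintro ⟨d, hreach, hterm, rfl⟩
      rcases reach_lt d hreach with rfl | rfl | rfl
      · exact absurd (by decide : I17.DecStep f17 c0 0) (hterm 0)
      · exact absurd (by decide : I17.DecStep f17 c1 1) (hterm 1)
      · rw [indM]; decide
    · rintro rfl
      refine ⟨c2, ?_, by decide, by rw [indM]; decide⟩
      exact Relation.ReflTransGen.tail
        (Relation.ReflTransGen.tail .refl ⟨0, by decide, by decide, rfl⟩)
        ⟨1, by decide, by decide, rfl⟩
  · intro M
    constructor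
    · rintro ⟨d, hreach, hterm, rfl⟩
      rcases reach_gt d hreach with rfl | rfl | rfl
      · exact absurd (by decide : I17.DecStep f17 c0 1) (hterm 1)
      · exact absurd (by decide : I17.DecStep f17 e1 0) (hterm 0)
      · rw [indM]; decide
    · rintro rfl
      refine ⟨e2, ?_, by decide, by rw [indM]; decide⟩
      exact Relation.ReflTransGen.tail
        (Relation.ReflTransGen.tail .refl ⟨1, by decide, by decide, rfl⟩)
        ⟨0, by decide, by decide, rfl⟩
  · exact ⟨by decide, by decide, by decide⟩
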